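/- Let V be a real inner product space of finite dimension n ≥ 5, let R be an algebraic curvature tensor on V, let {e₁,…,e_n} be an orthonormal basis of V, and let S₀ = (1/(n(n−1)))·Σ_{i,j=1}^{n} R(e_i,e_j,e_i,e_j) be the normalized scalar curvature of R. Set η_n = n(n−1)/(n²−n+12). If for every orthonormal four-frame {f₁,f₂,f₃,f₄} in V one has R(f₁,f₃,f₁,f₃) + R(f₁,f₄,f₁,f₄) + R(f₂,f₃,f₂,f₃) + R(f₂,f₄,f₂,f₄) > 4η_n·S₀, then for every orthonormal four-frame {f₁,f₂,f₃,f₄} in V one has R(f₁,f₂,f₁,f₂) + R(f₃,f₄,f₃,f₄) < 8η_n·S₀. -/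

import Mathlib

open scoped RealInnerProductSpace

variable {V : Type*} [NormedAddCommGroup V] [InnerProductSpace ℝ V]

/-- An algebraic curvature tensor on a real inner product space `V`:
an `ℝ`-multilinear map `V × V × V × V → ℝ` with the standard symmetries and
the first Bianchi identity. -/
def IsCurvatureTensor (R : V →ₗ[ℝ] V →ₗ[ℝ] V →ₗ[ℝ] V →ₗ[ℝ] ℝ) : Prop :=
  (∀ X Y Z W : V, R X Y Z W = - R Y X Z W) ∧
  (∀ X Y Z W : V, R X Y Z W = - R X Y W Z) ∧
  (∀ X Y Z W : V, R X Y Z W = R Z W X Y) ∧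
  (∀ X Y Z W : V, R X Y Z W + R X Z W Y + R X W Y Z = 0)

/-- An orthonormal four-frame: four pairwise orthogonal unit vectors. -/
def OrthonormalFrame4 (e₁ e₂ e₃ e₄ : V) : Prop :=
  ‖e₁‖ = 1 ∧ ‖e₂‖ = 1 ∧ ‖e₃‖ = 1 ∧ ‖e₄‖ = 1 ∧
  ⟪e₁, e₂⟫ = 0 ∧ ⟪e₁, e₃⟫ = 0 ∧ ⟪e₁, e₄⟫ = 0 ∧
  ⟪e₂, e₃⟫ = 0 ∧ ⟪e₂, e₄⟫ = 0 ∧ ⟪e₃, e₄⟫ = 0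

lemma trace_eq {n : ℕ} (e f : OrthonormalBasis (Fin n) ℝ V) (B : V →ₗ[ℝ] V →ₗ[ℝ] ℝ) :
    ∑ i, B (e i) (e i) = ∑ i, B (f i) (f i) := by
  have h1 : ∀ x : V, B x x = ∑ k, ∑ l, ⟪f k, x⟫ * ⟪f l, x⟫ * B (f l) (f k) := by
    intro x
    conv_lhs => rw [← f.sum_repr' x]
    simp only [map_sum, LinearMap.coe_sum, Finset.sum_apply, map_smul, LinearMap.smul_apply,
      smul_eq_mul, Finset.mul_sum]
    refine Finset.sum_congr rfl fun k _ => ?_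
    refine Finset.sum_congr rfl fun l _ => ?_
    ring
  have h2 : ∀ k l, (∑ i, ⟪f k, e i⟫ * ⟪f l, e i⟫) = if k = l then (1:ℝ) else 0 := by
    intro k l
    have := e.sum_inner_mul_inner (f k) (f l)
    calc (∑ i, ⟪f k, e i⟫ * ⟪f l, e i⟫) = ∑ i, ⟪f k, e i⟫ * ⟪e i, f l⟫ := by
          refine Finset.sum_congr rfl fun i _ => ?_
          rw [real_inner_comm (f l) (e i)]
      _ = ⟪f k, f l⟫ := this
      _ = if k = l then (1:ℝ) else 0 := by
          rcases eq_or_ne k l with h | h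
          · subst h
            simp [real_inner_self_eq_norm_sq, f.orthonormal.1 k]
          · simp [f.orthonormal.2 h, h]
  calc ∑ i, B (e i) (e i) = ∑ i, ∑ k, ∑ l, ⟪f k, e i⟫ * ⟪f l, e i⟫ * B (f l) (f k) := by
        exact Finset.sum_congr rfl fun i _ => h1 (e i)
    _ = ∑ k, ∑ l, (∑ i, ⟪f k, e i⟫ * ⟪f l, e i⟫) * B (f l) (f k) := by
        rw [Finset.sum_comm]
        refine Finset.sum_congr rfl fun k _ => ?_
        rw [Finset.sum_comm]
        refine Finset.sum_congr rfl fun l _ => ?_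
        rw [Finset.sum_mul]
    _ = ∑ k, B (f k) (f k) := by
        refine Finset.sum_congr rfl fun k _ => ?_
        rw [Finset.sum_eq_single k]
        · simp [h2]
        · intro l _ hl
          simp [h2, (Ne.symm hl)]
        · simp

noncomputable def Bin (R : V →ₗ[ℝ] V →ₗ[ℝ] V →ₗ[ℝ] V →ₗ[ℝ] ℝ) (X Y : V) :
    V →ₗ[ℝ] V →ₗ[ℝ] ℝ :=
  LinearMap.mk₂ ℝ (fun z w => R X z Y w)
    (by intro z z' w; simp)
    (by intro c z w; simp)
    (by intro z w w'; simp)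
    (by intro c z w; simp)

noncomputable def Bout {n : ℕ} (R : V →ₗ[ℝ] V →ₗ[ℝ] V →ₗ[ℝ] V →ₗ[ℝ] ℝ)
    (f : OrthonormalBasis (Fin n) ℝ V) : V →ₗ[ℝ] V →ₗ[ℝ] ℝ :=
  LinearMap.mk₂ ℝ (fun x y => ∑ k, R x (f k) y (f k))
    (by intro x x' y; simp [Finset.sum_add_distrib])
    (by intro c x y; simp [Finset.mul_sum])
    (by intro x y y'; simp [Finset.sum_add_distrib])
    (by intro c x y; simp [Finset.mul_sum])

lemma scalar_eq {n : ℕ} (e f : OrthonormalBasis (Fin n) ℝ V)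
    (R : V →ₗ[ℝ] V →ₗ[ℝ] V →ₗ[ℝ] V →ₗ[ℝ] ℝ) :
    ∑ i, ∑ j, R (e i) (e j) (e i) (e j) = ∑ i, ∑ j, R (f i) (f j) (f i) (f j) := by
  calc ∑ i, ∑ j, R (e i) (e j) (e i) (e j)
      = ∑ i, ∑ k, R (e i) (f k) (e i) (f k) := by
        refine Finset.sum_congr rfl fun i _ => ?_
        exact trace_eq e f (Bin R (e i) (e i))
    _ = ∑ i, (Bout R f) (e i) (e i) := by simp [Bout]
    _ = ∑ k, (Bout R f) (f k) (f k) := trace_eq e f (Bout R f)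
    _ = ∑ i, ∑ j, R (f i) (f j) (f i) (f j) := by simp [Bout]

lemma extend_frame {n : ℕ} (hn : 5 ≤ n) (b : OrthonormalBasis (Fin n) ℝ V)
    (f₁ f₂ f₃ f₄ : V) (hf : OrthonormalFrame4 f₁ f₂ f₃ f₄) :
    ∃ e : OrthonormalBasis (Fin n) ℝ V,
      e ⟨0, by omega⟩ = f₁ ∧ e ⟨1, by omega⟩ = f₂ ∧ e ⟨2, by omega⟩ = f₃ ∧
      e ⟨3, by omega⟩ = f₄ := by
  haveI : FiniteDimensional ℝ V := Module.Finite.of_basis b.toBasis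
  have hcard : Module.finrank ℝ V = Fintype.card (Fin n) := by
    simpa using Module.finrank_eq_card_basis b.toBasis
  obtain ⟨h1, h2, h3, h4, h12, h13, h14, h23, h24, h34⟩ := hf
  set v : Fin n → V := fun i =>
    if i.val = 0 then f₁ else if i.val = 1 then f₂ else if i.val = 2 then f₃
    else if i.val = 3 then f₄ else 0 with hv
  set s : Set (Fin n) := {i | i.val < 4} with hs
  have hon : Orthonormal ℝ (s.restrict v) := by
    rw [orthonormal_iff_ite]
    rintro ⟨i, hi⟩ ⟨j, hj⟩
    have hi4 : i.val = 0 ∨ i.val = 1 ∨ i.val = 2 ∨ i.val = 3 := by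
      simp only [hs, Set.mem_setOf_eq] at hi; omega
    have hj4 : j.val = 0 ∨ j.val = 1 ∨ j.val = 2 ∨ j.val = 3 := by
      simp only [hs, Set.mem_setOf_eq] at hj; omega
    have hsub : (⟨i, hi⟩ : s) = ⟨j, hj⟩ ↔ i.val = j.val := by
      simp [Subtype.ext_iff, Fin.ext_iff]
    rcases hi4 with hiv | hiv | hiv | hiv <;> rcases hj4 with hjv | hjv | hjv | hjv <;>
      simp [Set.restrict, Set.domRestrict_apply, hsub, hv, hiv, hjv, real_inner_self_eq_norm_mul_norm, h1, h2, h3, h4,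
        h12, h13, h14, h23, h24, h34, real_inner_comm f₁ f₂, real_inner_comm f₁ f₃,
        real_inner_comm f₁ f₄, real_inner_comm f₂ f₃, real_inner_comm f₂ f₄,
        real_inner_comm f₃ f₄]
  obtain ⟨e, he⟩ := hon.exists_orthonormalBasis_extension_of_card_eq hcard
  refine ⟨e, ?_, ?_, ?_, ?_⟩ <;>
    · rw [he _ (by simp [hs])]
      simp [hv]

lemma sum_sub_two {n : ℕ} (p q : Fin n) (hpq : q ≠ p) (g : Fin n → ℝ) :
    ∑ x ∈ (Finset.univ.erase p).erase q, g x = (∑ x, g x) - g p - g q := by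
  rw [Finset.sum_erase_eq_sub (Finset.mem_erase.mpr ⟨hpq, Finset.mem_univ q⟩),
      Finset.sum_erase_eq_sub (Finset.mem_univ p)]

set_option maxHeartbeats 2000000 in
theorem stmt_19 {V : Type*} [NormedAddCommGroup V] [InnerProductSpace ℝ V]
    (n : ℕ) (hn : 5 ≤ n) (b : OrthonormalBasis (Fin n) ℝ V)
    (R : V →ₗ[ℝ] V →ₗ[ℝ] V →ₗ[ℝ] V →ₗ[ℝ] ℝ) (hR : IsCurvatureTensor R)
    (S₀ : ℝ) (hS₀ : S₀ = (1 / ((n : ℝ) * ((n : ℝ) - 1))) *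
      ∑ i : Fin n, ∑ j : Fin n, R (b i) (b j) (b i) (b j))
    (η : ℝ) (hη : η = (n : ℝ) * ((n : ℝ) - 1) / ((n : ℝ) ^ 2 - (n : ℝ) + 12))
    (hyp : ∀ f₁ f₂ f₃ f₄ : V, OrthonormalFrame4 f₁ f₂ f₃ f₄ →
      R f₁ f₃ f₁ f₃ + R f₁ f₄ f₁ f₄ + R f₂ f₃ f₂ f₃ + R f₂ f₄ f₂ f₄ >
        4 * η * S₀) :
    ∀ f₁ f₂ f₃ f₄ : V, OrthonormalFrame4 f₁ f₂ f₃ f₄ →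
      R f₁ f₂ f₁ f₂ + R f₃ f₄ f₃ f₄ < 8 * η * S₀ := by
  intro f₁ f₂ f₃ f₄ hf
  obtain ⟨e, he0, he1, he2, he3⟩ := extend_frame hn b f₁ f₂ f₃ f₄ hf
  set N : ℝ := (n : ℝ) with hN
  have hn5 : (5 : ℝ) ≤ N := by rw [hN]; exact_mod_cast hn
  set i0 : Fin n := ⟨0, by omega⟩
  set i1 : Fin n := ⟨1, by omega⟩
  set i2 : Fin n := ⟨2, by omega⟩
  set i3 : Fin n := ⟨3, by omega⟩
  set K : Fin n → Fin n → ℝ := fun i j => R (e i) (e j) (e i) (e j) with hKdef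
  have hv0 : i0.val = 0 := rfl
  have hv1 : i1.val = 1 := rfl
  have hv2 : i2.val = 2 := rfl
  have hv3 : i3.val = 3 := rfl
  have hKd : ∀ i, K i i = 0 := by
    intro i
    have h := hR.1 (e i) (e i) (e i) (e i)
    simp only [hKdef]
    linarith
  have hKs : ∀ i j, K i j = K j i := by
    intro i j
    have h1 := hR.1 (e i) (e j) (e i) (e j)
    have h2 := hR.2.1 (e j) (e i) (e i) (e j)
    simp only [hKdef]
    linarith
  have hI : ∀ i j k l : Fin n, i ≠ j → i ≠ k → i ≠ l → j ≠ k → j ≠ l → k ≠ l →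
      4 * (η * S₀) < K i k + K i l + K j k + K j l := by
    intro i j k l hij hik hil hjk hjl hkl
    have hfr : OrthonormalFrame4 (e i) (e j) (e k) (e l) :=
      ⟨e.orthonormal.1 i, e.orthonormal.1 j, e.orthonormal.1 k, e.orthonormal.1 l,
       e.orthonormal.2 hij, e.orthonormal.2 hik, e.orthonormal.2 hil,
       e.orthonormal.2 hjk, e.orthonormal.2 hjl, e.orthonormal.2 hkl⟩
    have h := hyp _ _ _ _ hfr
    simp only [hKdef]
    linarith
  set A : Finset (Fin n) := Finset.univ.filter (fun i => 4 ≤ i.val) with hAdef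
  have hAmem : ∀ k : Fin n, k ∈ A ↔ 4 ≤ k.val := by intro k; simp [hAdef]
  have hAne : ∀ k ∈ A, k ≠ i0 ∧ k ≠ i1 ∧ k ≠ i2 ∧ k ≠ i3 := by
    intro k hk
    rw [hAmem] at hk
    refine ⟨?_, ?_, ?_, ?_⟩ <;> · intro h; rw [Fin.ext_iff] at h; omega
  have hne01 : i0 ≠ i1 := by rw [Ne, Fin.ext_iff]; omega
  have hne02 : i0 ≠ i2 := by rw [Ne, Fin.ext_iff]; omega
  have hne03 : i0 ≠ i3 := by rw [Ne, Fin.ext_iff]; omega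
  have hne12 : i1 ≠ i2 := by rw [Ne, Fin.ext_iff]; omega
  have hne13 : i1 ≠ i3 := by rw [Ne, Fin.ext_iff]; omega
  have hne23 : i2 ≠ i3 := by rw [Ne, Fin.ext_iff]; omega
  have hFeq : Finset.univ.filter (fun i : Fin n => ¬ 4 ≤ i.val) = {i0, i1, i2, i3} := by
    ext i
    simp only [Finset.mem_filter, Finset.mem_univ, true_and, Finset.mem_insert,
      Finset.mem_singleton, Fin.ext_iff, hv0, hv1, hv2, hv3]
    omega
  have hcard4 : ({i0, i1, i2, i3} : Finset (Fin n)).card = 4 := by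
    rw [Finset.card_insert_of_notMem (by simp [Finset.mem_insert, Fin.ext_iff]),
        Finset.card_insert_of_notMem (by simp [Finset.mem_insert, Fin.ext_iff, hv1, hv2, hv3]),
        Finset.card_insert_of_notMem (by simp [Fin.ext_iff, hv2, hv3]),
        Finset.card_singleton]
  have hAcard : A.card = n - 4 := by
    have h := Finset.card_filter_add_card_filter_not
      (s := (Finset.univ : Finset (Fin n))) (p := fun i => 4 ≤ i.val)
    rw [hFeq, hcard4, Finset.card_univ, Fintype.card_fin, ← hAdef] at h
    omega
  have hAcardR : (A.card : ℝ) = N - 4 := by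
    rw [hAcard, Nat.cast_sub (by omega)]
    simp [hN]
  have huniv : (Finset.univ : Finset (Fin n)) = insert i0 (insert i1 (insert i2 (insert i3 A))) := by
    ext i
    simp only [Finset.mem_univ, Finset.mem_insert, true_iff, Fin.ext_iff, hv0, hv1, hv2, hv3,
      hAmem]
    omega
  have hm0 : i0 ∉ insert i1 (insert i2 (insert i3 A)) := by
    simp only [Finset.mem_insert, Fin.ext_iff, hv0, hv1, hv2, hv3, hAmem]
    omega
  have hm1 : i1 ∉ insert i2 (insert i3 A) := by
    simp only [Finset.mem_insert, Fin.ext_iff, hv1, hv2, hv3, hAmem]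
    omega
  have hm2 : i2 ∉ insert i3 A := by
    simp only [Finset.mem_insert, Fin.ext_iff, hv2, hv3, hAmem]
    omega
  have hm3 : i3 ∉ A := by
    simp only [Fin.ext_iff, hv3, hAmem]
    omega
  have hsum_univ : ∀ g : Fin n → ℝ, ∑ i, g i = g i0 + g i1 + g i2 + g i3 + ∑ k ∈ A, g k := by
    intro g
    rw [huniv, Finset.sum_insert hm0, Finset.sum_insert hm1, Finset.sum_insert hm2,
      Finset.sum_insert hm3]
    ring

  -- row expansion helper
  have hrow0 : ∑ x, K i0 x = K i0 i0 + K i0 i1 + K i0 i2 + K i0 i3 + ∑ k ∈ A, K i0 k :=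
    hsum_univ (K i0)
  have hrow1 : ∑ x, K i1 x = K i1 i0 + K i1 i1 + K i1 i2 + K i1 i3 + ∑ k ∈ A, K i1 k :=
    hsum_univ (K i1)
  have hrow2 : ∑ x, K i2 x = K i2 i0 + K i2 i1 + K i2 i2 + K i2 i3 + ∑ k ∈ A, K i2 k :=
    hsum_univ (K i2)
  have hrow3 : ∑ x, K i3 x = K i3 i0 + K i3 i1 + K i3 i2 + K i3 i3 + ∑ k ∈ A, K i3 k :=
    hsum_univ (K i3)
  -- the star inequality
  have hstar : ∀ p q : Fin n, p ≠ q →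
      2*(N-2)*(η*S₀) ≤ (∑ x, K p x) + (∑ x, K q x) - 2*K p q := by
    intro p q hpq
    set B' : Finset (Fin n) := (Finset.univ.erase p).erase q with hB'def
    have hBmem : ∀ k ∈ B', k ≠ p ∧ k ≠ q := by
      intro k hk
      rw [hB'def, Finset.mem_erase, Finset.mem_erase] at hk
      exact ⟨hk.2.1, hk.1⟩
    have hBcard : B'.card = n - 2 := by
      rw [hB'def, Finset.card_erase_of_mem
          (Finset.mem_erase.mpr ⟨hpq.symm, Finset.mem_univ q⟩),
        Finset.card_erase_of_mem (Finset.mem_univ p), Finset.card_univ, Fintype.card_fin]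
      omega
    have hBcardR : (B'.card : ℝ) = N - 2 := by
      rw [hBcard, Nat.cast_sub (by omega)]; simp [hN]
    have hBecardR : ∀ k ∈ B', ((B'.erase k).card : ℝ) = N - 3 := by
      intro k hk
      rw [Finset.card_erase_of_mem hk, hBcard, show n - 2 - 1 = n - 3 from by omega,
        Nat.cast_sub (by omega)]
      simp [hN]
    have hT : ∑ x ∈ B', (K p x + K q x) = (∑ x, K p x) + (∑ x, K q x) - 2*K p q := by
      rw [hB'def, sum_sub_two p q hpq.symm, Finset.sum_add_distrib]
      rw [hKd p, hKd q, hKs q p]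
      ring
    have big : ∑ k ∈ B', ∑ l ∈ B'.erase k, (4*(η*S₀)) ≤
        ∑ k ∈ B', ∑ l ∈ B'.erase k, (K p k + K p l + K q k + K q l) := by
      refine Finset.sum_le_sum fun k hk => Finset.sum_le_sum fun l hl => ?_
      have hlk : l ≠ k := (Finset.mem_erase.mp hl).1
      have hlB : l ∈ B' := (Finset.mem_erase.mp hl).2
      obtain ⟨hkp, hkq⟩ := hBmem k hk
      obtain ⟨hlp, hlq⟩ := hBmem l hlB
      exact (hI p q k l hpq hkp.symm hlp.symm hkq.symm hlq.symm hlk.symm).le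
    have lhsbig : ∑ k ∈ B', ∑ l ∈ B'.erase k, (4*(η*S₀)) = (N-2)*((N-3)*(4*(η*S₀))) := by
      rw [Finset.sum_congr rfl (fun k hk => by
        rw [Finset.sum_const, nsmul_eq_mul, hBecardR k hk]), Finset.sum_const, nsmul_eq_mul,
        hBcardR]
    have rhsbig : ∑ k ∈ B', ∑ l ∈ B'.erase k, (K p k + K p l + K q k + K q l) =
        2*(N-3)*(∑ x ∈ B', (K p x + K q x)) := by
      have inner : ∀ k ∈ B', ∑ l ∈ B'.erase k, (K p k + K p l + K q k + K q l) =
          (N-4)*(K p k + K q k) + ∑ x ∈ B', (K p x + K q x) := by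
        intro k hk
        rw [Finset.sum_congr rfl (fun l _ => show K p k + K p l + K q k + K q l =
          (K p k + K q k) + (K p l + K q l) from by ring), Finset.sum_add_distrib,
          Finset.sum_const, nsmul_eq_mul, hBecardR k hk, Finset.sum_erase_eq_sub hk]
        ring
      rw [Finset.sum_congr rfl inner, Finset.sum_add_distrib, ← Finset.mul_sum,
        Finset.sum_const, nsmul_eq_mul, hBcardR]
      ring
    rw [lhsbig, rhsbig, hT] at big
    have h3 : (0:ℝ) < N - 3 := by linarith
    by_contra hc
    push_neg at hc
    nlinarith [mul_pos h3 (sub_pos.mpr hc)]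
  -- aggregate 1 and 2
  have a1 : 2*(N-2)*(η*S₀) ≤
      (K i0 i2 + K i0 i3 + K i1 i2 + K i1 i3) + ((∑ k ∈ A, K i0 k) + ∑ k ∈ A, K i1 k) := by
    have h := hstar i0 i1 hne01
    rw [hrow0, hrow1] at h
    have e1 := hKd i0; have e2 := hKd i1; have e3 := hKs i1 i0
    linarith
  have a2 : 2*(N-2)*(η*S₀) ≤
      (K i0 i2 + K i0 i3 + K i1 i2 + K i1 i3) + ((∑ k ∈ A, K i2 k) + ∑ k ∈ A, K i3 k) := by
    have h := hstar i2 i3 hne23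
    rw [hrow2, hrow3] at h
    have e1 := hKd i2; have e2 := hKd i3; have e3 := hKs i3 i2
    have e4 := hKs i2 i0; have e5 := hKs i2 i1; have e6 := hKs i3 i0; have e7 := hKs i3 i1
    linarith
  -- aggregate 3 (strict)
  have hAnonempty : A.Nonempty := by
    rw [← Finset.card_pos, hAcard]; omega
  have a3 : ∑ k ∈ A, (16*(η*S₀)) < ∑ k ∈ A,
      (2*(K i0 i2 + K i0 i3 + K i1 i2 + K i1 i3) + 2*(K i0 k + K i1 k + K i2 k + K i3 k)) := by
    refine Finset.sum_lt_sum_of_nonempty hAnonempty fun k hk => ?_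
    obtain ⟨hk0, hk1, hk2, hk3⟩ := hAne k hk
    have t1 := hI i0 i1 i2 k hne01 hne02 hk0.symm hne12 hk1.symm hk2.symm
    have t2 := hI i0 i1 i3 k hne01 hne03 hk0.symm hne13 hk1.symm hk3.symm
    have t3 := hI i2 i3 i0 k hne23 hne02.symm hk2.symm hne03.symm hk3.symm hk0.symm
    have t4 := hI i2 i3 i1 k hne23 hne12.symm hk2.symm hne13.symm hk3.symm hk1.symm
    have e1 := hKs i2 i0; have e2 := hKs i2 i1; have e3 := hKs i3 i0; have e4 := hKs i3 i1
    linarith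
  have a3' : 16*(N-4)*(η*S₀) < 2*(N-4)*(K i0 i2 + K i0 i3 + K i1 i2 + K i1 i3) +
      2*((∑ k ∈ A, K i0 k) + (∑ k ∈ A, K i1 k) + (∑ k ∈ A, K i2 k) + ∑ k ∈ A, K i3 k) := by
    have l : ∑ k ∈ A, (16*(η*S₀)) = (N-4)*(16*(η*S₀)) := by
      rw [Finset.sum_const, nsmul_eq_mul, hAcardR]
    have r : ∑ k ∈ A, (2*(K i0 i2 + K i0 i3 + K i1 i2 + K i1 i3)
          + 2*(K i0 k + K i1 k + K i2 k + K i3 k)) =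
        (N-4)*(2*(K i0 i2 + K i0 i3 + K i1 i2 + K i1 i3)) +
          2*((∑ k ∈ A, K i0 k) + (∑ k ∈ A, K i1 k) + (∑ k ∈ A, K i2 k) + ∑ k ∈ A, K i3 k) := by
      rw [Finset.sum_add_distrib, Finset.sum_const, nsmul_eq_mul, hAcardR,
        Finset.sum_congr rfl (fun k _ => show
          2*(K i0 k + K i1 k + K i2 k + K i3 k) =
          K i0 k + K i1 k + K i2 k + K i3 k + (K i0 k + K i1 k + K i2 k + K i3 k) from by ring)]
      simp only [Finset.sum_add_distrib]
      ring
    rw [l, r] at a3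
    linarith
  -- erase-card over A
  have hAecardR : ∀ k ∈ A, ((A.erase k).card : ℝ) = N - 5 := by
    intro k hk
    rw [Finset.card_erase_of_mem hk, hAcard, show n - 4 - 1 = n - 5 from by omega,
      Nat.cast_sub (by omega)]
    simp [hN]
  have hcount2 : ∀ c : ℝ, ∑ k ∈ A, ∑ l ∈ A.erase k, c = (N-4)*((N-5)*c) := by
    intro c
    rw [Finset.sum_congr rfl (fun k hk => by
      rw [Finset.sum_const, nsmul_eq_mul, hAecardR k hk]), Finset.sum_const, nsmul_eq_mul,
      hAcardR]
  -- aggregate 4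
  have a4 : ∑ k ∈ A, ∑ l ∈ A.erase k, (16*(η*S₀)) ≤ ∑ k ∈ A, ∑ l ∈ A.erase k,
      ((K i0 i2 + K i0 i3 + K i1 i2 + K i1 i3) + 2*(K i0 l + K i1 l)
        + 2*(K i2 k + K i3 k) + 4*(K k l)) := by
    refine Finset.sum_le_sum fun k hk => Finset.sum_le_sum fun l hl => ?_
    have hlk : l ≠ k := (Finset.mem_erase.mp hl).1
    have hlA : l ∈ A := (Finset.mem_erase.mp hl).2
    obtain ⟨hk0, hk1, hk2, hk3⟩ := hAne k hk
    obtain ⟨hl0, hl1, hl2, hl3⟩ := hAne l hlA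
    have t1 := hI i0 k i2 l hk0.symm hne02 hl0.symm hk2 hlk.symm hl2.symm
    have t2 := hI i0 k i3 l hk0.symm hne03 hl0.symm hk3 hlk.symm hl3.symm
    have t3 := hI i1 k i2 l hk1.symm hne12 hl1.symm hk2 hlk.symm hl2.symm
    have t4 := hI i1 k i3 l hk1.symm hne13 hl1.symm hk3 hlk.symm hl3.symm
    have e1 := hKs k i2; have e2 := hKs k i3
    linarith
  have a4' : 16*(N-4)*(N-5)*(η*S₀) ≤
      (N-4)*(N-5)*(K i0 i2 + K i0 i3 + K i1 i2 + K i1 i3)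
      + (2*(N-4) - 2)*((∑ k ∈ A, K i0 k) + ∑ k ∈ A, K i1 k)
      + 2*(N-5)*((∑ k ∈ A, K i2 k) + ∑ k ∈ A, K i3 k)
      + 4*(∑ k ∈ A, ∑ l ∈ A, K k l) := by
    have l := hcount2 (16*(η*S₀))
    have r : ∑ k ∈ A, ∑ l ∈ A.erase k,
        ((K i0 i2 + K i0 i3 + K i1 i2 + K i1 i3) + 2*(K i0 l + K i1 l)
          + 2*(K i2 k + K i3 k) + 4*(K k l)) =
        (N-4)*(N-5)*(K i0 i2 + K i0 i3 + K i1 i2 + K i1 i3)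
        + (2*(N-4) - 2)*((∑ k ∈ A, K i0 k) + ∑ k ∈ A, K i1 k)
        + 2*(N-5)*((∑ k ∈ A, K i2 k) + ∑ k ∈ A, K i3 k)
        + 4*(∑ k ∈ A, ∑ l ∈ A, K k l) := by
      have inner : ∀ k ∈ A, ∑ l ∈ A.erase k,
          ((K i0 i2 + K i0 i3 + K i1 i2 + K i1 i3) + 2*(K i0 l + K i1 l)
            + 2*(K i2 k + K i3 k) + 4*(K k l)) =
          ((N-5)*(K i0 i2 + K i0 i3 + K i1 i2 + K i1 i3)
            + 2*(∑ x ∈ A, K i0 x) + 2*(∑ x ∈ A, K i1 x))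
          + (2*(N-5))*(K i2 k) + (2*(N-5))*(K i3 k)
          + (-2)*(K i0 k) + (-2)*(K i1 k) + 4*(∑ l ∈ A, K k l) := by
        intro k hk
        rw [Finset.sum_congr rfl (fun l _ => show
          (K i0 i2 + K i0 i3 + K i1 i2 + K i1 i3) + 2*(K i0 l + K i1 l)
            + 2*(K i2 k + K i3 k) + 4*(K k l) =
          ((K i0 i2 + K i0 i3 + K i1 i2 + K i1 i3) + 2*(K i2 k + K i3 k))
            + (2*(K i0 l + K i1 l) + 4*(K k l)) from by ring), Finset.sum_add_distrib,
          Finset.sum_const, nsmul_eq_mul, hAecardR k hk, Finset.sum_erase_eq_sub hk]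
        have split : ∑ l ∈ A, (2*(K i0 l + K i1 l) + 4*(K k l)) =
            2*(∑ x ∈ A, K i0 x) + 2*(∑ x ∈ A, K i1 x) + 4*(∑ l ∈ A, K k l) := by
          simp only [mul_add, Finset.sum_add_distrib, ← Finset.mul_sum]
        rw [split, hKd k]
        ring
      rw [Finset.sum_congr rfl inner]
      simp only [Finset.sum_add_distrib, ← Finset.mul_sum, Finset.sum_const, nsmul_eq_mul,
        hAcardR]
      ring
    rw [l, r] at a4
    linarith
  -- aggregate 5
  have a5 : ∑ k ∈ A, ∑ l ∈ A.erase k, (2*(N-2)*(η*S₀)) ≤ ∑ k ∈ A, ∑ l ∈ A.erase k,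
      ((∑ x, K k x) + (∑ x, K l x) - 2*K k l) := by
    refine Finset.sum_le_sum fun k hk => Finset.sum_le_sum fun l hl => ?_
    exact hstar k l (Finset.mem_erase.mp hl).1.symm
  have a5' : 2*(N-2)*(η*S₀)*((N-4)*(N-5)) ≤
      2*(N-5)*(∑ k ∈ A, ∑ x, K k x) - 2*(∑ k ∈ A, ∑ l ∈ A, K k l) := by
    have l := hcount2 (2*(N-2)*(η*S₀))
    have r : ∑ k ∈ A, ∑ l ∈ A.erase k, ((∑ x, K k x) + (∑ x, K l x) - 2*K k l) =
        2*(N-5)*(∑ k ∈ A, ∑ x, K k x) - 2*(∑ k ∈ A, ∑ l ∈ A, K k l) := by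
      have inner : ∀ k ∈ A, ∑ l ∈ A.erase k, ((∑ x, K k x) + (∑ x, K l x) - 2*K k l) =
          (N-6)*(∑ x, K k x) + (∑ l ∈ A, ∑ x, K l x) + (-2)*(∑ l ∈ A, K k l) := by
        intro k hk
        rw [Finset.sum_congr rfl (fun l _ => show
            (∑ x, K k x) + (∑ x, K l x) - 2*K k l =
            (∑ x, K k x) + ((∑ x, K l x) - 2*K k l) from by ring),
          Finset.sum_add_distrib, Finset.sum_const, nsmul_eq_mul, hAecardR k hk,
          Finset.sum_sub_distrib, Finset.sum_erase_eq_sub hk,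
          ← Finset.mul_sum, Finset.sum_erase_eq_sub hk, hKd k]
        ring
      rw [Finset.sum_congr rfl inner]
      simp only [Finset.sum_add_distrib, ← Finset.mul_sum, Finset.sum_const, nsmul_eq_mul,
        hAcardR]
      ring
    rw [l, r] at a5
    linarith
  have hRT : ∑ k ∈ A, ∑ x, K k x =
      ((∑ k ∈ A, K i0 k) + (∑ k ∈ A, K i1 k) + (∑ k ∈ A, K i2 k) + ∑ k ∈ A, K i3 k)
      + ∑ k ∈ A, ∑ l ∈ A, K k l := by
    rw [Finset.sum_congr rfl (fun k _ => hsum_univ (K k))]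
    rw [Finset.sum_congr rfl (fun k (_ : k ∈ A) => show
      K k i0 + K k i1 + K k i2 + K k i3 + ∑ l ∈ A, K k l =
      K i0 k + K i1 k + K i2 k + K i3 k + ∑ l ∈ A, K k l from by
        rw [hKs k i0, hKs k i1, hKs k i2, hKs k i3])]
    simp only [Finset.sum_add_distrib]
  -- the total scalar curvature
  have hS : ∑ i, ∑ j, K i j = N*(N-1)*S₀ := by
    have h0 : ∑ i, ∑ j, K i j = ∑ i, ∑ j, R (b i) (b j) (b i) (b j) := by
      simp only [hKdef]
      exact scalar_eq e b R
    have hnz : N*(N-1) ≠ 0 := by nlinarith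
    have hn1 : N - 1 ≠ 0 := by linarith
    rw [h0, hS₀]
    field_simp
  have hE : 2*(K i0 i1) + 2*(K i2 i3) + 2*(K i0 i2 + K i0 i3 + K i1 i2 + K i1 i3)
      + 2*((∑ k ∈ A, K i0 k) + (∑ k ∈ A, K i1 k) + (∑ k ∈ A, K i2 k) + ∑ k ∈ A, K i3 k)
      + (∑ k ∈ A, ∑ l ∈ A, K k l) = N*(N-1)*S₀ := by
    rw [← hS, hsum_univ (fun i => ∑ j, K i j), hrow0, hrow1, hrow2, hrow3, hRT]
    have e0 := hKd i0; have e1 := hKd i1; have e2 := hKd i2; have e3 := hKd i3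
    have s1 := hKs i1 i0; have s2 := hKs i2 i0; have s3 := hKs i2 i1
    have s4 := hKs i3 i0; have s5 := hKs i3 i1; have s6 := hKs i3 i2
    ring_nf
    linarith

  -- final combination
  have hP : N*(N-1)*S₀ = (N^2 - N + 12)*(η*S₀) := by
    have hd : (0:ℝ) < N^2 - N + 12 := by nlinarith
    have hd' : N*(N-1)+12 ≠ 0 := by nlinarith
    rw [hη]
    field_simp
  rw [hRT] at a5'
  have h44 : (0:ℝ) < N^2 - 13*N + 44 := by nlinarith [sq_nonneg (2*N-13)]
  have h36 : (0:ℝ) < N^2 - 11*N + 36 := by nlinarith [sq_nonneg (2*N-11)]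
  have h12 : (0:ℝ) < N^2 - 7*N + 12 := by nlinarith
  have hx2 : (0:ℝ) ≤ (N-5)*(N^2-13*N+44)/2 :=
    div_nonneg (mul_nonneg (by linarith) h44.le) (by norm_num)
  have ht2 : (0:ℝ) ≤ (N^2-11*N+36)/4 := div_nonneg h36.le (by norm_num)
  have hlam : (0:ℝ) < (N-5)*(N^2-13*N+44) + (N^2-7*N+12) :=
    add_pos_of_nonneg_of_pos (mul_nonneg (by linarith) h44.le) h12
  have key : ((N-5)*(N^2-13*N+44) + (N^2-7*N+12)) *
      (8*(η*S₀) - (K i0 i1 + K i2 i3)) =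
      ((N-5)*(N^2-13*N+44)/2) *
        (((K i0 i2 + K i0 i3 + K i1 i2 + K i1 i3)
          + ((∑ k ∈ A, K i0 k) + ∑ k ∈ A, K i1 k)) - 2*(N-2)*(η*S₀))
    + ((N-5)*(N^2-13*N+44)/2) *
        (((K i0 i2 + K i0 i3 + K i1 i2 + K i1 i3)
          + ((∑ k ∈ A, K i2 k) + ∑ k ∈ A, K i3 k)) - 2*(N-2)*(η*S₀))
    + ((2*(N-4)*(K i0 i2 + K i0 i3 + K i1 i2 + K i1 i3)
        + 2*((∑ k ∈ A, K i0 k) + ∑ k ∈ A, K i1 k + ∑ k ∈ A, K i2 k + ∑ k ∈ A, K i3 k))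
        - 16*(N-4)*(η*S₀))
    + (((N-4)*(N-5)*(K i0 i2 + K i0 i3 + K i1 i2 + K i1 i3)
        + (2*(N-4) - 2)*((∑ k ∈ A, K i0 k) + ∑ k ∈ A, K i1 k)
        + 2*(N-5)*((∑ k ∈ A, K i2 k) + ∑ k ∈ A, K i3 k)
        + 4*(∑ k ∈ A, ∑ l ∈ A, K k l)) - 16*(N-4)*(N-5)*(η*S₀))
    + ((N^2-11*N+36)/4) *
        ((2*(N-5)*(((∑ k ∈ A, K i0 k) + (∑ k ∈ A, K i1 k) + (∑ k ∈ A, K i2 k)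
            + ∑ k ∈ A, K i3 k) + ∑ k ∈ A, ∑ l ∈ A, K k l)
          - 2*(∑ k ∈ A, ∑ l ∈ A, K k l))
          - 2*(N-2)*(η*S₀)*((N-4)*(N-5))) := by
    linear_combination (-((N-5)*(N^2-13*N+44) + (N^2-7*N+12))/2) * hE
      + (-((N-5)*(N^2-13*N+44) + (N^2-7*N+12))/2) * hP
  have p1 : (0:ℝ) ≤ ((N-5)*(N^2-13*N+44)/2) *
      (((K i0 i2 + K i0 i3 + K i1 i2 + K i1 i3)
        + ((∑ k ∈ A, K i0 k) + ∑ k ∈ A, K i1 k)) - 2*(N-2)*(η*S₀)) :=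
    mul_nonneg hx2 (by linarith)
  have p2 : (0:ℝ) ≤ ((N-5)*(N^2-13*N+44)/2) *
      (((K i0 i2 + K i0 i3 + K i1 i2 + K i1 i3)
        + ((∑ k ∈ A, K i2 k) + ∑ k ∈ A, K i3 k)) - 2*(N-2)*(η*S₀)) :=
    mul_nonneg hx2 (by linarith)
  have p5 : (0:ℝ) ≤ ((N^2-11*N+36)/4) *
      ((2*(N-5)*(((∑ k ∈ A, K i0 k) + (∑ k ∈ A, K i1 k) + (∑ k ∈ A, K i2 k)
          + ∑ k ∈ A, K i3 k) + ∑ k ∈ A, ∑ l ∈ A, K k l)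
        - 2*(∑ k ∈ A, ∑ l ∈ A, K k l))
        - 2*(N-2)*(η*S₀)*((N-4)*(N-5))) :=
    mul_nonneg ht2 (by linarith)
  have hXpos : 0 < 8*(η*S₀) - (K i0 i1 + K i2 i3) := by
    have hprod : 0 < ((N-5)*(N^2-13*N+44) + (N^2-7*N+12)) *
        (8*(η*S₀) - (K i0 i1 + K i2 i3)) := by
      rw [key]
      have q3 : (0:ℝ) < (2*(N-4)*(K i0 i2 + K i0 i3 + K i1 i2 + K i1 i3)
        + 2*((∑ k ∈ A, K i0 k) + ∑ k ∈ A, K i1 k + ∑ k ∈ A, K i2 k + ∑ k ∈ A, K i3 k))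
        - 16*(N-4)*(η*S₀) := by linarith
      have q4 : (0:ℝ) ≤ ((N-4)*(N-5)*(K i0 i2 + K i0 i3 + K i1 i2 + K i1 i3)
        + (2*(N-4) - 2)*((∑ k ∈ A, K i0 k) + ∑ k ∈ A, K i1 k)
        + 2*(N-5)*((∑ k ∈ A, K i2 k) + ∑ k ∈ A, K i3 k)
        + 4*(∑ k ∈ A, ∑ l ∈ A, K k l)) - 16*(N-4)*(N-5)*(η*S₀) := by linarith
      linarith
    by_contra hc
    push_neg at hc
    have hneg : (0:ℝ) ≤ ((N-5)*(N^2-13*N+44) + (N^2-7*N+12)) *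
        (-(8*(η*S₀) - (K i0 i1 + K i2 i3))) :=
      mul_nonneg hlam.le (neg_nonneg.mpr hc)
    rw [mul_neg] at hneg
    linarith
  have g1 : K i0 i1 = R f₁ f₂ f₁ f₂ := by
    simp only [hKdef]
    rw [he0, he1]
  have g2 : K i2 i3 = R f₃ f₄ f₃ f₄ := by
    simp only [hKdef]
    rw [he2, he3]
  rw [← g1, ← g2]
  linarith
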